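/- On the open set {u₁ ≠ u₂, u₁ ≠ 0, u₂ ≠ 0} ⊂ ℝ⁴ with coordinates (u₁,u₂,p₁,p₂), define H = u₁(2u₁+u₂)p₁²/(u₁−u₂) + u₂(u₁+2u₂)p₂²/(u₂−u₁) − 2u₁² − 3u₁u₂ − 2u₂² and K = (u₁²u₂²/(u₂−u₁)³)·( (3u₁+u₂)p₁⁴ − (u₁+3u₂)p₂⁴ − 8u₁p₁³p₂ + 8u₂p₁p₂³ + 6(u₁−u₂)p₁²p₂² − 2(u₁−u₂)(u₁+3u₂)p₁² + 8(u₁²−u₂²)p₁p₂ − 2(u₁−u₂)(3u₁+u₂)p₂² − (u₁−u₂)³ ). Then {H, K} = 0 with respect to the canonical Poisson bracket; i.e. the natural Hamiltonian H, quadratic in momenta, possesses a first integral K which is a polynomial of fourth order in momenta. -/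

import Mathlib

/-- The canonical Poisson bracket on `ℝ⁴` with coordinates `(u₁,u₂,p₁,p₂)`. -/
noncomputable def poissonBracket (f g : ℝ → ℝ → ℝ → ℝ → ℝ) (u₁ u₂ p₁ p₂ : ℝ) : ℝ :=
    deriv (fun x => f x u₂ p₁ p₂) u₁ * deriv (fun y => g u₁ u₂ y p₂) p₁
  + deriv (fun x => f u₁ x p₁ p₂) u₂ * deriv (fun y => g u₁ u₂ p₁ y) p₂
  - deriv (fun y => f u₁ u₂ y p₂) p₁ * deriv (fun x => g x u₂ p₁ p₂) u₁
  - deriv (fun y => f u₁ u₂ p₁ y) p₂ * deriv (fun x => g u₁ x p₁ p₂) u₂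

/-- Natural position-dependent-mass Hamiltonian `H = T + V`, quadratic in momenta. -/
noncomputable def HFun (x₁ x₂ y₁ y₂ : ℝ) : ℝ :=
  x₁ * (2 * x₁ + x₂) * y₁ ^ 2 / (x₁ - x₂) + x₂ * (x₁ + 2 * x₂) * y₂ ^ 2 / (x₂ - x₁)
    - 2 * x₁ ^ 2 - 3 * x₁ * x₂ - 2 * x₂ ^ 2

/-- Quartic-in-momenta first integral `K`. -/
noncomputable def KFun (x₁ x₂ y₁ y₂ : ℝ) : ℝ :=
  x₁ ^ 2 * x₂ ^ 2 / (x₂ - x₁) ^ 3 *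
    ((3 * x₁ + x₂) * y₁ ^ 4 - (x₁ + 3 * x₂) * y₂ ^ 4 - 8 * x₁ * y₁ ^ 3 * y₂
      + 8 * x₂ * y₁ * y₂ ^ 3 + 6 * (x₁ - x₂) * y₁ ^ 2 * y₂ ^ 2
      - 2 * (x₁ - x₂) * (x₁ + 3 * x₂) * y₁ ^ 2
      + 8 * (x₁ ^ 2 - x₂ ^ 2) * y₁ * y₂
      - 2 * (x₁ - x₂) * (3 * x₁ + x₂) * y₂ ^ 2 - (x₁ - x₂) ^ 3)

theorem H_K_in_involution (u₁ u₂ p₁ p₂ : ℝ)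
    (h : u₁ ≠ u₂) (h₁ : u₁ ≠ 0) (h₂ : u₂ ≠ 0) :
    poissonBracket HFun KFun u₁ u₂ p₁ p₂ = 0 := by
  have hne : u₁ - u₂ ≠ 0 := sub_ne_zero.mpr h
  have hne' : u₂ - u₁ ≠ 0 := sub_ne_zero.mpr (Ne.symm h)
  have hne3 : (u₂ - u₁) ^ 3 ≠ 0 := pow_ne_zero _ hne'
  -- ∂H/∂u₁
  have hHx1 :=
    (((((hasDerivAt_id' u₁).mul (((hasDerivAt_id' u₁).const_mul 2).add_const u₂)).mul_const
            (p₁ ^ 2)).div ((hasDerivAt_id' u₁).sub_const u₂) hne).add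
          (((((hasDerivAt_id' u₁).add_const (2 * u₂)).const_mul u₂).mul_const (p₂ ^ 2)).div
            ((hasDerivAt_id' u₁).const_sub u₂) hne')).sub
        ((hasDerivAt_pow 2 u₁).const_mul 2) |>.sub
      (((hasDerivAt_id' u₁).const_mul 3).mul_const u₂) |>.sub_const (2 * u₂ ^ 2)
  -- ∂H/∂u₂
  have hHx2 :=
    (((((hasDerivAt_id' u₂).const_add (2 * u₁)).const_mul u₁).mul_const (p₁ ^ 2)).div
          ((hasDerivAt_id' u₂).const_sub u₁) hne).add
        ((((hasDerivAt_id' u₂).mul (((hasDerivAt_id' u₂).const_mul 2).const_add u₁)).mul_const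
            (p₂ ^ 2)).div ((hasDerivAt_id' u₂).sub_const u₁) hne') |>.sub_const
      (2 * u₁ ^ 2) |>.sub ((hasDerivAt_id' u₂).const_mul (3 * u₁)) |>.sub
    ((hasDerivAt_pow 2 u₂).const_mul 2)
  -- ∂H/∂p₁
  have hHy1 :=
    (((hasDerivAt_pow 2 p₁).const_mul (u₁ * (2 * u₁ + u₂))).div_const (u₁ - u₂)).add_const
        (u₂ * (u₁ + 2 * u₂) * p₂ ^ 2 / (u₂ - u₁)) |>.sub_const (2 * u₁ ^ 2) |>.sub_const
      (3 * u₁ * u₂) |>.sub_const (2 * u₂ ^ 2)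
  -- ∂H/∂p₂
  have hHy2 :=
    (((hasDerivAt_pow 2 p₂).const_mul (u₂ * (u₁ + 2 * u₂))).div_const (u₂ - u₁)).const_add
        (u₁ * (2 * u₁ + u₂) * p₁ ^ 2 / (u₁ - u₂)) |>.sub_const (2 * u₁ ^ 2) |>.sub_const
      (3 * u₁ * u₂) |>.sub_const (2 * u₂ ^ 2)
  -- ∂K/∂p₁
  have hKy1 :=
    ((hasDerivAt_pow 4 p₁).const_mul (3 * u₁ + u₂) |>.sub_const ((u₁ + 3 * u₂) * p₂ ^ 4) |>.sub
          (((hasDerivAt_pow 3 p₁).const_mul (8 * u₁)).mul_const p₂) |>.add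
        (((hasDerivAt_id' p₁).const_mul (8 * u₂)).mul_const (p₂ ^ 3)) |>.add
        (((hasDerivAt_pow 2 p₁).const_mul (6 * (u₁ - u₂))).mul_const (p₂ ^ 2)) |>.sub
        ((hasDerivAt_pow 2 p₁).const_mul (2 * (u₁ - u₂) * (u₁ + 3 * u₂))) |>.add
        (((hasDerivAt_id' p₁).const_mul (8 * (u₁ ^ 2 - u₂ ^ 2))).mul_const p₂) |>.sub_const
        (2 * (u₁ - u₂) * (3 * u₁ + u₂) * p₂ ^ 2) |>.sub_const
        ((u₁ - u₂) ^ 3)).const_mul (u₁ ^ 2 * u₂ ^ 2 / (u₂ - u₁) ^ 3)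
  -- ∂K/∂p₂
  have hKy2 :=
    ((hasDerivAt_pow 4 p₂).const_mul (u₁ + 3 * u₂) |>.const_sub ((3 * u₁ + u₂) * p₁ ^ 4) |>.sub
          ((hasDerivAt_id' p₂).const_mul (8 * u₁ * p₁ ^ 3)) |>.add
        ((hasDerivAt_pow 3 p₂).const_mul (8 * u₂ * p₁)) |>.add
        ((hasDerivAt_pow 2 p₂).const_mul (6 * (u₁ - u₂) * p₁ ^ 2)) |>.sub_const
        (2 * (u₁ - u₂) * (u₁ + 3 * u₂) * p₁ ^ 2) |>.add
        ((hasDerivAt_id' p₂).const_mul (8 * (u₁ ^ 2 - u₂ ^ 2) * p₁)) |>.sub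
        ((hasDerivAt_pow 2 p₂).const_mul (2 * (u₁ - u₂) * (3 * u₁ + u₂))) |>.sub_const
        ((u₁ - u₂) ^ 3)).const_mul (u₁ ^ 2 * u₂ ^ 2 / (u₂ - u₁) ^ 3)
  -- ∂K/∂u₁
  have hKx1 :=
    (((hasDerivAt_pow 2 u₁).mul_const (u₂ ^ 2)).div (((hasDerivAt_id' u₁).const_sub u₂).pow 3)
        hne3).mul
      ((((hasDerivAt_id' u₁).const_mul 3).add_const u₂).mul_const (p₁ ^ 4) |>.sub
          (((hasDerivAt_id' u₁).add_const (3 * u₂)).mul_const (p₂ ^ 4)) |>.sub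
        ((((hasDerivAt_id' u₁).const_mul 8).mul_const (p₁ ^ 3)).mul_const p₂) |>.add_const
        (8 * u₂ * p₁ * p₂ ^ 3) |>.add
        (((((hasDerivAt_id' u₁).sub_const u₂).const_mul 6).mul_const (p₁ ^ 2)).mul_const
          (p₂ ^ 2)) |>.sub
        (((((hasDerivAt_id' u₁).sub_const u₂).const_mul 2).mul
            ((hasDerivAt_id' u₁).add_const (3 * u₂))).mul_const (p₁ ^ 2)) |>.add
        (((((hasDerivAt_pow 2 u₁).sub_const (u₂ ^ 2)).const_mul 8).mul_const p₁).mul_const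
          p₂) |>.sub
        (((((hasDerivAt_id' u₁).sub_const u₂).const_mul 2).mul
            (((hasDerivAt_id' u₁).const_mul 3).add_const u₂)).mul_const (p₂ ^ 2)) |>.sub
        (((hasDerivAt_id' u₁).sub_const u₂).pow 3))
  -- ∂K/∂u₂
  have hKx2 :=
    (((hasDerivAt_pow 2 u₂).const_mul (u₁ ^ 2)).div (((hasDerivAt_id' u₂).sub_const u₁).pow 3)
        hne3).mul
      (((hasDerivAt_id' u₂).const_add (3 * u₁)).mul_const (p₁ ^ 4) |>.sub
          ((((hasDerivAt_id' u₂).const_mul 3).const_add u₁).mul_const (p₂ ^ 4)) |>.sub_const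
        (8 * u₁ * p₁ ^ 3 * p₂) |>.add
        ((((hasDerivAt_id' u₂).const_mul 8).mul_const p₁).mul_const (p₂ ^ 3)) |>.add
        (((((hasDerivAt_id' u₂).const_sub u₁).const_mul 6).mul_const (p₁ ^ 2)).mul_const
          (p₂ ^ 2)) |>.sub
        (((((hasDerivAt_id' u₂).const_sub u₁).const_mul 2).mul
            (((hasDerivAt_id' u₂).const_mul 3).const_add u₁)).mul_const (p₁ ^ 2)) |>.add
        (((((hasDerivAt_pow 2 u₂).const_sub (u₁ ^ 2)).const_mul 8).mul_const p₁).mul_const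
          p₂) |>.sub
        (((((hasDerivAt_id' u₂).const_sub u₁).const_mul 2).mul
            ((hasDerivAt_id' u₂).const_add (3 * u₁))).mul_const (p₂ ^ 2)) |>.sub
        (((hasDerivAt_id' u₂).const_sub u₁).pow 3))
  simp only [poissonBracket, HFun, KFun]
  erw [hHx1.deriv, hHx2.deriv, hHy1.deriv, hHy2.deriv, hKx1.deriv, hKx2.deriv, hKy1.deriv,
    hKy2.deriv]
  simp only [Pi.mul_apply, Pi.div_apply, Pi.sub_apply, Pi.add_apply, Pi.pow_apply, Nat.cast_ofNat]
  field_simp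
  ring
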